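/- arXiv:1811.08457 — 4 statements merged into one kernel-verified Lean document; each statement's English description precedes it below -/
import Mathlib

section
/- For any natural numbers n and k and any coloring f : [ω₁]ⁿ → k of the n-element subsets of ω₁ with k colors, there exists a subset A ⊆ ω₁ of order type ω + 1 such that f is constant on the n-element subsets of A. -/
/-
Proof of the Dushnik–Miller partition relation ω₁ → (ω+1)ⁿ_k.

Outline:
* `DM.ramsey_nat`: the infinite Ramsey theorem on ℕ (not in Mathlib).
* `DM.closure_exists`: there is δ < ω₁ closed under the countably many
  "bounding" operations for the family of sets `Yset f m F h`
  (F a finite subset of δ): every such set containing δ is uncountable and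
  hence unbounded below δ.
* `DM.main_construction`: below such a δ one builds an increasing ω-sequence
  x₀ < x₁ < ⋯ < δ such that the colour of any (m+1)-set from the sequence
  equals the colour obtained by replacing its top element by δ.
* Applying Ramsey's theorem to the induced m-set colouring of the indices
  yields a homogeneous set of order type ω+1 with top element δ.
-/

namespace DM

open Set Cardinal

theorem ramsey_nat : ∀ (m : ℕ) {k : ℕ} (g : Finset ℕ → Fin k) (A : Set ℕ), A.Infinite →
    ∃ B, B ⊆ A ∧ B.Infinite ∧ ∃ c, ∀ I : Finset ℕ, ↑I ⊆ B → I.card = m → g I = c := by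
  intro m
  induction m with
  | zero =>
    intro k g A hA
    exact ⟨A, le_refl _, hA, g ∅, fun I _ hc => by rw [Finset.card_eq_zero.mp hc]⟩
  | succ m ih =>
    intro k g A hA
    classical
    let T := {p : ℕ × Set ℕ × Fin k //
      p.2.1.Infinite ∧ p.2.1 ⊆ A ∧ p.1 ∈ A ∧ (∀ b ∈ p.2.1, p.1 < b) ∧
      ∀ I : Finset ℕ, ↑I ⊆ p.2.1 → I.card = m → g (insert p.1 I) = p.2.2}
    have hstep : ∀ S₀ : Set ℕ, S₀.Infinite → S₀ ⊆ A →
        ∃ q : T, q.1.1 ∈ S₀ ∧ q.1.2.1 ⊆ S₀ := by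
      intro S₀ hS₀ hS₀A
      obtain ⟨a, ha⟩ := hS₀.nonempty
      have hS' : (S₀ ∩ Set.Ioi a).Infinite := by
        have he : S₀ ∩ Set.Ioi a = S₀ \ Set.Iic a := by
          ext b; simp [Set.mem_diff, not_le, Set.mem_Ioi, and_comm]
        rw [he]; exact hS₀.diff (Set.finite_Iic a)
      obtain ⟨B, hBsub, hBinf, c, hc⟩ := ih (fun I => g (insert a I)) _ hS'
      refine ⟨⟨(a, B, c), hBinf, ?_, hS₀A ha, ?_, hc⟩, ha, fun b hb => (hBsub hb).1⟩
      · exact hBsub.trans Set.inter_subset_left |>.trans hS₀A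
      · intro b hb; exact (hBsub hb).2
    have hstep' : ∀ p : T, ∃ q : T, q.1.1 ∈ p.1.2.1 ∧ q.1.2.1 ⊆ p.1.2.1 :=
      fun p => hstep p.1.2.1 p.2.1 p.2.2.1
    choose st h1 h2 using hstep'
    obtain ⟨q₀, _, _⟩ := hstep A hA subset_rfl
    let seq : ℕ → T := fun i => st^[i] q₀
    have hseq_succ : ∀ i, seq (i + 1) = st (seq i) := fun i =>
      Function.iterate_succ_apply' st i q₀
    let a : ℕ → ℕ := fun i => (seq i).1.1
    let S : ℕ → Set ℕ := fun i => (seq i).1.2.1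
    let c : ℕ → Fin k := fun i => (seq i).1.2.2
    have hmem : ∀ i, a (i + 1) ∈ S i := by
      intro i; show (seq (i+1)).1.1 ∈ _; rw [hseq_succ i]; exact h1 (seq i)
    have hsub : ∀ i, S (i + 1) ⊆ S i := by
      intro i; show (seq (i+1)).1.2.1 ⊆ _; rw [hseq_succ i]; exact h2 (seq i)
    have hlt : ∀ i, ∀ b ∈ S i, a i < b := fun i => (seq i).2.2.2.2.1
    have hcol : ∀ i, ∀ I : Finset ℕ, ↑I ⊆ S i → I.card = m → g (insert (a i) I) = c i :=
      fun i => (seq i).2.2.2.2.2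
    have hAmem : ∀ i, a i ∈ A := fun i => (seq i).2.2.2.1
    have hmono : StrictMono a := strictMono_nat_of_lt_succ (fun i => hlt i _ (hmem i))
    have hSmono : ∀ i j, i ≤ j → S j ⊆ S i := by
      intro i j hij
      induction j, hij using Nat.le_induction with
      | base => exact subset_rfl
      | succ j' hj' ihh => exact (hsub j').trans ihh
    have hcross : ∀ i j, i < j → a j ∈ S i := by
      intro i j hij
      obtain ⟨j', rfl⟩ := Nat.exists_eq_add_of_lt hij
      exact hSmono i (i + j') (Nat.le_add_right _ _) (hmem (i + j'))
    obtain ⟨c₀, hc₀⟩ := Finite.exists_infinite_fiber c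
    have hE : (c ⁻¹' {c₀} : Set ℕ).Infinite := Set.infinite_coe_iff.mp hc₀
    refine ⟨a '' (c ⁻¹' {c₀}), ?_, hE.image hmono.injective.injOn, c₀, ?_⟩
    · rintro _ ⟨i, _, rfl⟩; exact hAmem i
    · intro I hI hcard
      set J : Finset ℕ := I.preimage a hmono.injective.injOn with hJdef
      have hJI : J.image a = I := by
        ext b
        simp only [Finset.mem_image, hJdef, Finset.mem_preimage]
        constructor
        · rintro ⟨j, hj, rfl⟩; exact hj
        · intro hb; obtain ⟨i, _, rfl⟩ := hI hb; exact ⟨i, hb, rfl⟩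
      have hJcard : J.card = m + 1 := by
        rw [← hcard, ← hJI, Finset.card_image_of_injective _ hmono.injective]
      have hJne : J.Nonempty := Finset.card_pos.mp (by rw [hJcard]; exact Nat.succ_pos m)
      set j₀ := J.min' hJne with hj₀def
      have hj₀J : j₀ ∈ J := J.min'_mem hJne
      have hJE : ∀ j ∈ J, c j = c₀ := by
        intro j hj
        have haj : a j ∈ I := hJI ▸ Finset.mem_image_of_mem a hj
        obtain ⟨i, hiE, hia⟩ := hI haj
        have := hmono.injective hia
        subst this
        exact hiE
      have hIeq : I = insert (a j₀) ((J.erase j₀).image a) := by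
        rw [← Finset.image_insert, Finset.insert_erase hj₀J, hJI]
      have hsub' : ↑((J.erase j₀).image a) ⊆ S j₀ := by
        intro b hb
        simp only [Finset.coe_image, Set.mem_image, Finset.mem_coe] at hb
        obtain ⟨j, hj, rfl⟩ := hb
        have hne := Finset.ne_of_mem_erase hj
        have hjJ := Finset.mem_of_mem_erase hj
        exact hcross j₀ j (lt_of_le_of_ne (J.min'_le j hjJ) (Ne.symm hne))
      have hcard' : ((J.erase j₀).image a).card = m := by
        rw [Finset.card_image_of_injective _ hmono.injective,
          Finset.card_erase_of_mem hj₀J, hJcard]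
        omega
      rw [hIeq, hcol j₀ _ hsub' hcard', hJE j₀ hj₀J]


universe u v

local notation "Ω" => Cardinal.ord (Cardinal.aleph 1)

lemma omega1_isLimit : Order.IsSuccLimit Ω := Cardinal.isSuccLimit_ord (Cardinal.aleph0_le_aleph 1)

lemma lt_omega1 {β : Ordinal.{u}} (hn : β.card ≤ ℵ₀) : β < Ω :=
  Cardinal.lt_ord.2 (hn.trans_lt Cardinal.aleph0_lt_aleph_one)

lemma card_le_of_lt_omega1 {β : Ordinal.{u}} (hβ : β < Ω) : β.card ≤ ℵ₀ := by
  have h := Cardinal.lt_ord.1 hβ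
  rwa [← Cardinal.succ_aleph0, Order.lt_succ_iff] at h

lemma succ_lt_omega1 {β : Ordinal.{u}} (hβ : β < Ω) : β + 1 < Ω := by
  rw [Ordinal.add_one_eq_succ]
  exact omega1_isLimit.succ_lt hβ

lemma countable_Iio {β : Ordinal.{u}} (hβ : β < Ω) : (Set.Iio β).Countable := by
  rw [← Cardinal.le_aleph0_iff_set_countable, Ordinal.mk_Iio_ordinal]
  calc Cardinal.lift.{u+1} β.card ≤ Cardinal.lift.{u+1} ℵ₀ :=
        Cardinal.lift_le.2 (card_le_of_lt_omega1 hβ)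
    _ = ℵ₀ := Cardinal.lift_aleph0

lemma exists_bound {ι : Type v} [Countable ι] (b : ι → Ordinal.{u}) (hb : ∀ i, b i < Ω) :
    ∃ γ, γ < Ω ∧ ∀ i, b i < γ := by
  cases isEmpty_or_nonempty ι with
  | inl h => exact ⟨1, lt_omega1 (by simp), fun i => (h.false i).elim⟩
  | inr h =>
    obtain ⟨nf, hn⟩ := countable_iff_exists_surjective.mp ‹Countable ι›
    have hbdd : BddAbove (Set.range fun j : ℕ => b (nf j)) :=
      ⟨Ω, by rintro _ ⟨j, rfl⟩; exact (hb _).le⟩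
    have h1 : (⨆ j : ℕ, b (nf j)) < Ω := by
      apply Ordinal.iSup_lt_ord_lift _ (fun j => hb _)
      rw [Cardinal.mk_nat, Cardinal.lift_aleph0, Cardinal.isRegular_aleph_one.cof_eq]
      exact Cardinal.aleph0_lt_aleph_one
    refine ⟨(⨆ j : ℕ, b (nf j)) + 1, succ_lt_omega1 h1, fun i => ?_⟩
    obtain ⟨j, rfl⟩ := hn i
    have h2 : b (nf j) ≤ ⨆ j : ℕ, b (nf j) := le_ciSup hbdd j
    exact h2.trans_lt (Order.lt_succ _)

lemma countable_finsets {s : Set Ordinal.{u}} (hs : s.Countable) :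
    Countable {F : Finset Ordinal.{u} // ↑F ⊆ s} := by
  have h1 : {t : Set Ordinal.{u} | t.Finite ∧ t ⊆ s}.Countable :=
    Set.countable_setOf_finite_subset hs
  have := h1.to_subtype
  have hinj : Function.Injective (fun F : {F : Finset Ordinal.{u} // ↑F ⊆ s} =>
      (⟨↑F.1, F.1.finite_toSet, F.2⟩ : {t : Set Ordinal.{u} | t.Finite ∧ t ⊆ s})) := by
    intro F G hFG
    apply Subtype.ext
    apply Finset.coe_injective
    exact congrArg Subtype.val hFG
  exact hinj.countable

/-- The key family of sets for the closure argument. -/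
def Yset {k : ℕ} (f : Finset Ordinal.{u} → Fin k) (m : ℕ) (F : Finset Ordinal.{u})
    (h : Finset Ordinal.{u} → Fin k) : Set Ordinal.{u} :=
  {y | y < Ω ∧ (∀ a ∈ F, a < y) ∧
    ∀ s : Finset Ordinal.{u}, s ⊆ F → s.card = m → f (insert y s) = h s}

lemma next_exists {k : ℕ} (f : Finset Ordinal.{u} → Fin k) (m : ℕ) (hk : 0 < k)
    {β : Ordinal.{u}} (hβ : β < Ω) :
    ∃ γ, β < γ ∧ γ < Ω ∧ ∀ (F : Finset Ordinal.{u}) (h : Finset Ordinal.{u} → Fin k),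
      ↑F ⊆ Set.Iio β →
      ((Yset f m F h).Countable → Yset f m F h ⊆ Set.Iio γ) ∧
      (¬(Yset f m F h).Countable → ∃ y ∈ Yset f m F h, β < y ∧ y < γ) := by
  classical
  have hP : Countable {F : Finset Ordinal.{u} // ↑F ⊆ Set.Iio β} :=
    countable_finsets (countable_Iio hβ)
  let ι := Σ p : {F : Finset Ordinal.{u} // ↑F ⊆ Set.Iio β}, (↥(p.1.powerset) → Fin k)
  let extf : ι → (Finset Ordinal.{u} → Fin k) := fun i s =>
    if hs : s ∈ i.1.1.powerset then i.2 ⟨s, hs⟩ else ⟨0, hk⟩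
  have hbnd : ∀ i : ι, ∃ b, b < Ω ∧
      ((Yset f m i.1.1 (extf i)).Countable → Yset f m i.1.1 (extf i) ⊆ Set.Iio b) ∧
      (¬(Yset f m i.1.1 (extf i)).Countable → b ∈ Yset f m i.1.1 (extf i) ∧ β < b) := by
    intro i
    by_cases hc : (Yset f m i.1.1 (extf i)).Countable
    · have hsub : Yset f m i.1.1 (extf i) ⊆ Set.Iio Ω := fun y hy => hy.1
      have := hc.to_subtype
      obtain ⟨γ, hγ, hγ2⟩ := exists_bound
        (fun y : ↥(Yset f m i.1.1 (extf i)) => (y : Ordinal.{u})) (fun y => hsub y.2)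
      exact ⟨γ, hγ, fun _ y hy => hγ2 ⟨y, hy⟩, fun hcon => absurd hc hcon⟩
    · have hns : ¬ (Yset f m i.1.1 (extf i) ⊆ Set.Iio (β + 1)) := fun hsub =>
        hc ((countable_Iio (succ_lt_omega1 hβ)).mono hsub)
      obtain ⟨y, hy, hy2⟩ : ∃ y ∈ Yset f m i.1.1 (extf i), ¬ y < β + 1 := by
        by_contra hcon; push_neg at hcon; exact hns hcon
      refine ⟨y, hy.1, fun hcon => absurd hcon hc, fun _ => ⟨hy, ?_⟩⟩
      rw [not_lt, Ordinal.add_one_eq_succ, Order.succ_le_iff] at hy2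
      exact hy2
  choose bnd hbnd1 hbnd2 hbnd3 using hbnd
  obtain ⟨γ₀, hγ₀, hγb⟩ := exists_bound bnd hbnd1
  refine ⟨max γ₀ (β + 1), lt_max_iff.2 (Or.inr (Order.lt_succ β |>.trans_eq
    (Ordinal.add_one_eq_succ β).symm)), max_lt hγ₀ (succ_lt_omega1 hβ), ?_⟩
  intro F h hF
  let i : ι := ⟨⟨F, hF⟩, fun s => h s.1⟩
  have hYeq : Yset f m F h = Yset f m F (extf i) := by
    unfold extf
    unfold Yset
    ext y
    simp only [Set.mem_setOf_eq]
    constructor <;> rintro ⟨h1, h2, h3⟩ <;> refine ⟨h1, h2, fun s hs hcard => ?_⟩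
    · rw [h3 s hs hcard, dif_pos (Finset.mem_powerset.mpr hs)]
    · rw [h3 s hs hcard, dif_pos (Finset.mem_powerset.mpr hs)]
  have hii : i.1.1 = F := rfl
  constructor
  · intro hc y hy
    have hyb : y ∈ Set.Iio (bnd i) := hbnd2 i (by rw [hii, ← hYeq]; exact hc)
      (by rw [hii, ← hYeq]; exact hy)
    exact hyb.trans_le ((hγb i).le.trans (le_max_left _ _))
  · intro hc
    obtain ⟨hmem, hgt⟩ := hbnd3 i (by rw [hii, ← hYeq]; exact hc)
    refine ⟨bnd i, by rw [hYeq]; exact hmem, hgt, (hγb i).trans_le (le_max_left _ _)⟩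

lemma closure_exists {k : ℕ} (f : Finset Ordinal.{u} → Fin k) (m : ℕ) (hk : 0 < k) :
    ∃ δ : Ordinal.{u}, 0 < δ ∧ δ < Ω ∧
      ∀ (F : Finset Ordinal.{u}) (h : Finset Ordinal.{u} → Fin k), ↑F ⊆ Set.Iio δ →
        δ ∈ Yset f m F h → ∀ β < δ, ∃ y ∈ Yset f m F h, β < y ∧ y < δ := by
  classical
  have hstep : ∀ p : {β : Ordinal.{u} // β < Ω}, ∃ q : {β : Ordinal.{u} // β < Ω},
      p.1 < q.1 ∧ ∀ (F : Finset Ordinal.{u}) (h : Finset Ordinal.{u} → Fin k),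
        ↑F ⊆ Set.Iio p.1 →
        ((Yset f m F h).Countable → Yset f m F h ⊆ Set.Iio q.1) ∧
        (¬(Yset f m F h).Countable → ∃ y ∈ Yset f m F h, p.1 < y ∧ y < q.1) := by
    intro p
    obtain ⟨γ, h1, h2, h3⟩ := next_exists f m hk p.2
    exact ⟨⟨γ, h2⟩, h1, h3⟩
  choose st hlt hreq using hstep
  let sq : ℕ → {β : Ordinal.{u} // β < Ω} := fun i => st^[i] ⟨0, lt_omega1 (by simp)⟩
  have hsq : ∀ i, sq (i + 1) = st (sq i) := fun i => Function.iterate_succ_apply' st i _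
  have hmono : StrictMono (fun i => (sq i).1) := strictMono_nat_of_lt_succ (fun i => by
    show (sq i).1 < (sq (i+1)).1
    rw [hsq i]; exact hlt (sq i))
  have hbdd : BddAbove (Set.range fun i => (sq i).1) :=
    ⟨Ω, by rintro _ ⟨i, rfl⟩; exact (sq i).2.le⟩
  have hle : ∀ i, (sq i).1 ≤ ⨆ i, (sq i).1 := fun i => le_ciSup hbdd i
  have hsqlt : ∀ i, (sq i).1 < ⨆ i, (sq i).1 :=
    fun i => (hmono (Nat.lt_succ_self i)).trans_le (hle (i + 1))
  have hδΩ : (⨆ i, (sq i).1) < Ω := by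
    apply Ordinal.iSup_lt_ord_lift _ (fun i => (sq i).2)
    rw [Cardinal.mk_nat, Cardinal.lift_aleph0, Cardinal.isRegular_aleph_one.cof_eq]
    exact Cardinal.aleph0_lt_aleph_one
  have hsq0 : (sq 0).1 = 0 := rfl
  have h0 : 0 < ⨆ i, (sq i).1 := by have := hsqlt 0; rwa [hsq0] at this
  have hfind : ∀ β < (⨆ i, (sq i).1), ∃ i, β < (sq i).1 := by
    intro β hβ
    by_contra hcon
    push_neg at hcon
    exact absurd (ciSup_le hcon) (not_le.mpr hβ)
  refine ⟨⨆ i, (sq i).1, h0, hδΩ, ?_⟩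
  intro F h hF hδY β hβ
  have hFJ : ∃ J, ↑F ⊆ Set.Iio (sq J).1 ∧ β < (sq J).1 := by
    obtain ⟨j1, hj1⟩ := hfind β hβ
    rcases F.eq_empty_or_nonempty with rfl | hne
    · exact ⟨j1, by simp, hj1⟩
    · obtain ⟨j2, hj2⟩ := hfind (F.max' hne) (hF (F.max'_mem hne))
      refine ⟨max j1 j2, fun a ha => ?_, hj1.trans_le (hmono.monotone (le_max_left _ _))⟩
      exact lt_of_le_of_lt (F.le_max' a ha) (hj2.trans_le (hmono.monotone (le_max_right _ _)))
  obtain ⟨J, hFJ1, hβJ⟩ := hFJ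
  have hreqJ := hreq (sq J) F h hFJ1
  by_cases hc : (Yset f m F h).Countable
  · exfalso
    have hδin := hreqJ.1 hc hδY
    rw [← hsq J] at hδin
    exact absurd hδin (not_lt.mpr (hsqlt (J + 1)).le)
  · obtain ⟨y, hy, hy1, hy2⟩ := hreqJ.2 hc
    rw [← hsq J] at hy2
    exact ⟨y, hy, hβJ.trans hy1, hy2.trans (hsqlt (J + 1))⟩


lemma main_construction {k m : ℕ} (f : Finset Ordinal.{u} → Fin k) (hk : 0 < k) :
    ∃ (x : ℕ → Ordinal.{u}) (δ : Ordinal.{u}), StrictMono x ∧ (∀ i, x i < δ) ∧ δ < Ω ∧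
      ∀ (i : ℕ) (s : Finset Ordinal.{u}), (∀ a ∈ s, ∃ j, j < i ∧ a = x j) → s.card = m →
        f (insert (x i) s) = f (insert δ s) := by
  classical
  obtain ⟨δ, hδ0, hδΩ, hδ⟩ := closure_exists f m hk
  let hd : Finset Ordinal.{u} → Fin k := fun s => f (insert δ s)
  have hδY : ∀ F : Finset Ordinal.{u}, ↑F ⊆ Set.Iio δ → δ ∈ Yset f m F hd := by
    intro F hF
    exact ⟨hδΩ, fun a ha => hF ha, fun s _ _ => rfl⟩
  let T := {p : Finset Ordinal.{u} × Ordinal.{u} //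
    ↑p.1 ⊆ Set.Iio p.2 ∧ p.2 < δ ∧ p.2 ∈ Yset f m p.1 hd}
  have hstep : ∀ p : T, ∃ q : T, q.1.1 = insert p.1.2 p.1.1 ∧ p.1.2 < q.1.2 := by
    intro p
    obtain ⟨hp1, hp2, hp3⟩ := p.2
    have hF' : ↑(insert p.1.2 p.1.1 : Finset Ordinal.{u}) ⊆ Set.Iio δ := by
      intro a ha
      rw [Finset.coe_insert, Set.mem_insert_iff] at ha
      rcases ha with rfl | ha
      · exact hp2
      · exact (hp1 ha).trans hp2
    obtain ⟨y, hy, hy1, hy2⟩ := hδ _ hd hF' (hδY _ hF') p.1.2 hp2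
    refine ⟨⟨(insert p.1.2 p.1.1, y), ?_, hy2, hy⟩, rfl, hy1⟩
    intro a ha
    rw [Finset.coe_insert, Set.mem_insert_iff] at ha
    rcases ha with rfl | ha
    · exact hy1
    · exact (hp1 ha).trans hy1
  obtain ⟨y₀, hy₀, _, hy₀δ⟩ := hδ ∅ hd (by simp) (hδY ∅ (by simp)) 0 hδ0
  choose st h1 h2 using hstep
  let init : T := ⟨(∅, y₀), by simp, hy₀δ, hy₀⟩
  let sq : ℕ → T := fun i => st^[i] init
  have hsq : ∀ i, sq (i + 1) = st (sq i) := fun i => Function.iterate_succ_apply' st i _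
  let x : ℕ → Ordinal.{u} := fun i => (sq i).1.2
  have hxmono : StrictMono x := strictMono_nat_of_lt_succ (fun i => by
    show x i < (sq (i + 1)).1.2
    rw [hsq i]; exact h2 (sq i))
  have hxδ : ∀ i, x i < δ := fun i => (sq i).2.2.1
  have hFr : ∀ i, (sq i).1.1 = (Finset.range i).image x := by
    intro i
    induction i with
    | zero => simp [sq, init]
    | succ i ihi =>
      have hh : (sq (i + 1)).1.1 = insert (x i) ((sq i).1.1) := by rw [hsq i]; exact h1 (sq i)
      rw [hh, ihi, Finset.range_add_one, Finset.image_insert]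
  refine ⟨x, δ, hxmono, hxδ, hδΩ, ?_⟩
  intro i s hs hcard
  have hmem : x i ∈ Yset f m ((Finset.range i).image x) hd := by
    rw [← hFr i]; exact (sq i).2.2.2
  have hssub : s ⊆ (Finset.range i).image x := by
    intro a ha
    obtain ⟨j, hj, rfl⟩ := hs a ha
    exact Finset.mem_image_of_mem x (Finset.mem_range.mpr hj)
  exact hmem.2.2 s hssub hcard

end DM

/-- Dushnik–Miller partition relation `ω₁ → (ω+1)ⁿ_k`: for any coloring of the
`n`-element subsets of `ω₁` with `k` colors there is a subset of order type `ω+1`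
(coded as the range of a strictly increasing sequence `α` together with a top
element `δ` above all of them, everything below `ω₁`) on whose `n`-element
subsets the coloring is constant. -/
theorem stmt_0 (n k : ℕ) (f : Finset Ordinal → Fin k) :
    ∃ (α : ℕ → Ordinal) (δ : Ordinal), StrictMono α ∧ (∀ j, α j < δ) ∧
      δ < (Cardinal.aleph 1).ord ∧
      ∃ c : Fin k, ∀ s : Finset Ordinal,
        ↑s ⊆ Set.range α ∪ {δ} → s.card = n → f s = c := by
  classical
  rcases k with _ | k'
  · exact (f ∅).elim0
  rcases n with _ | m
  · refine ⟨fun j => (j : Ordinal), Ordinal.omega0, ?_, fun j => Ordinal.nat_lt_omega0 j,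
      ?_, f ∅, ?_⟩
    · intro a b hab
      exact Nat.cast_lt.mpr hab
    · rw [Cardinal.lt_ord, Ordinal.card_omega0]
      exact Cardinal.aleph0_lt_aleph_one
    · intro s _ hcard
      rw [Finset.card_eq_zero.mp hcard]
  · obtain ⟨x, δ, hxmono, hxδ, hδΩ, hcol⟩ :=
      DM.main_construction (k := k' + 1) (m := m) f (Nat.succ_pos _)
    have hxinj : Function.Injective x := hxmono.injective
    let g : Finset ℕ → Fin (k' + 1) := fun I => f (insert δ (I.image x))
    obtain ⟨B, _, hBinf, c, hBc⟩ := DM.ramsey_nat m g Set.univ Set.infinite_univ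
    have hBgt : ∀ a : ℕ, ∃ b, b ∈ B ∧ a < b := by
      intro a
      obtain ⟨b, hb1, hb2⟩ := (hBinf.diff (Set.finite_Iic a)).nonempty
      exact ⟨b, hb1, not_le.mp hb2⟩
    choose nxt hnmem hnlt using hBgt
    let e : ℕ → ℕ := fun i => nxt^[i] (nxt 0)
    have he : ∀ i, e (i + 1) = nxt (e i) := fun i => Function.iterate_succ_apply' nxt i _
    have hemono : StrictMono e := strictMono_nat_of_lt_succ (fun i => by
      show e i < e (i + 1)
      rw [he i]; exact hnlt (e i))
    have heB : ∀ i, e i ∈ B := by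
      intro i
      cases i with
      | zero => exact hnmem 0
      | succ i => rw [he i]; exact hnmem (e i)
    refine ⟨fun j => x (e j), δ, hxmono.comp hemono, fun j => hxδ (e j), hδΩ, c, ?_⟩
    intro s hssub hcard
    have hmem_cases : ∀ a ∈ s, a = δ ∨ ∃ j, a = x (e j) := by
      intro a ha
      rcases hssub ha with ⟨j, rfl⟩ | ha'
      · exact Or.inr ⟨j, rfl⟩
      · exact Or.inl ha'
    by_cases hδs : δ ∈ s
    · -- δ ∈ s
      have hcases' : ∀ a ∈ s.erase δ, ∃ j, a = x (e j) := by
        intro a ha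
        rcases hmem_cases a (Finset.mem_of_mem_erase ha) with rfl | h'
        · exact absurd rfl (Finset.ne_of_mem_erase ha)
        · exact h'
      set I : Finset ℕ := (s.erase δ).preimage x hxinj.injOn with hIdef
      have hIimg : I.image x = s.erase δ := by
        ext b
        simp only [Finset.mem_image, hIdef, Finset.mem_preimage]
        constructor
        · rintro ⟨j, hj, rfl⟩; exact hj
        · intro hb
          obtain ⟨j, rfl⟩ := hcases' b hb
          exact ⟨e j, hb, rfl⟩
      have hIB : ↑I ⊆ B := by
        intro j hj
        rw [Finset.mem_coe, hIdef, Finset.mem_preimage] at hj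
        obtain ⟨j', hj'⟩ := hcases' _ hj
        rw [hxinj hj']
        exact heB j'
      have hIcard : I.card = m := by
        have h1 : (I.image x).card = I.card := Finset.card_image_of_injective _ hxinj
        rw [hIimg, Finset.card_erase_of_mem hδs, hcard] at h1
        omega
      have hseq : s = insert δ (I.image x) := by
        rw [hIimg, Finset.insert_erase hδs]
      rw [hseq]
      exact hBc I hIB hIcard
    · -- δ ∉ s
      have hcases' : ∀ a ∈ s, ∃ j, a = x (e j) := by
        intro a ha
        rcases hmem_cases a ha with rfl | h'
        · exact absurd ha hδs
        · exact h'
      set I : Finset ℕ := s.preimage x hxinj.injOn with hIdef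
      have hIimg : I.image x = s := by
        ext b
        simp only [Finset.mem_image, hIdef, Finset.mem_preimage]
        constructor
        · rintro ⟨j, hj, rfl⟩; exact hj
        · intro hb
          obtain ⟨j, rfl⟩ := hcases' b hb
          exact ⟨e j, hb, rfl⟩
      have hIB : ↑I ⊆ B := by
        intro j hj
        rw [Finset.mem_coe, hIdef, Finset.mem_preimage] at hj
        obtain ⟨j', hj'⟩ := hcases' _ hj
        rw [hxinj hj']
        exact heB j'
      have hIcard : I.card = m + 1 := by
        have h1 : (I.image x).card = I.card := Finset.card_image_of_injective _ hxinj
        rw [hIimg, hcard] at h1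
        omega
      have hIne : I.Nonempty := Finset.card_pos.mp (by rw [hIcard]; exact Nat.succ_pos m)
      set j₀ := I.max' hIne with hj₀def
      have hj₀I : j₀ ∈ I := I.max'_mem hIne
      have hseq : s = insert (x j₀) ((I.erase j₀).image x) := by
        rw [← Finset.image_insert, Finset.insert_erase hj₀I, hIimg]
      have hlt' : ∀ a ∈ (I.erase j₀).image x, ∃ j, j < j₀ ∧ a = x j := by
        intro a ha
        simp only [Finset.mem_image] at ha
        obtain ⟨j, hj, rfl⟩ := ha
        refine ⟨j, ?_, rfl⟩
        exact lt_of_le_of_ne (I.le_max' j (Finset.mem_of_mem_erase hj))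
          (Finset.ne_of_mem_erase hj)
      have hcard' : ((I.erase j₀).image x).card = m := by
        rw [Finset.card_image_of_injective _ hxinj, Finset.card_erase_of_mem hj₀I, hIcard]
        omega
      have hI'B : ↑(I.erase j₀) ⊆ B := by
        intro j hj
        rw [Finset.mem_coe] at hj
        exact hIB (Finset.mem_coe.mpr (Finset.mem_of_mem_erase hj))
      have hIcard' : (I.erase j₀).card = m := by
        rw [Finset.card_erase_of_mem hj₀I, hIcard]
        omega
      rw [hseq, hcol j₀ _ hlt' hcard']
      exact hBc (I.erase j₀) hI'B hIcard'
end

section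
/- Fix r ≥ 2 and for l ≤ r let s_l ∈ ℕ^{r+l} be the string of 2l many 2's followed by r − l many 4's. Suppose l' < l ≤ r, and suppose ā is a tuple of r + l' ordinals and b̄ a tuple of r + l ordinals arranged so that: ā consists of pairs (γ_k, δ_k) for k < l' followed by singletons β^i_k for l' ≤ k < l (at step i) followed by singletons ε_k for l ≤ k < r, and b̄ consists of the same pairs (γ_k, δ_k) for k < l', then pairs (β^i_k, β^j_k) for l' ≤ k < l, then the same ε_k for l ≤ k < r. If x_i = (1/2)·(s_{l'} * ā_i) and x_j = (1/2)·(s_{l'} * ā_j) (with i ≠ j, sharing the pairs and singletons but with disjoint middle parts), then x_i + x_j = s_l * b̄_{i,j}. -/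
/-- The star operation: for a string `s ∈ ℚ^k` and a `k`-tuple `a` of indices,
`star s a` is the finitely supported function sending `a m` to `s m`. -/
noncomputable def star {k : ℕ} {I : Type*} (s : Fin k → ℚ) (a : Fin k → I) : I →₀ ℚ :=
  ∑ m, Finsupp.single (a m) (s m)

/-- The string `s_{r,l}` of length `r + l`: `2l` many `2`'s followed by
`r − l` many `4`'s. -/
def sStr (r l : ℕ) : Fin (r + l) → ℚ := fun m => if (m : ℕ) < 2 * l then 2 else 4

/-- The tuple `ā_i` (of length `r + l'`): pairs `(γ_k, δ_k)` for `k < l'`, then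
singletons `β_k` for `l' ≤ k < l`, then singletons `ε_k` for `l ≤ k < r`. -/
def tupA (l' l : ℕ) (γ δ β ε : ℕ → Ordinal) : ℕ → Ordinal := fun m =>
  if m < 2 * l' then (if m % 2 = 0 then γ (m / 2) else δ (m / 2))
  else if m < l' + l then β (m - l')
  else ε (m - l')

/-- The tuple `b̄_{i,j}` (of length `r + l`): pairs `(γ_k, δ_k)` for `k < l'`,
then pairs `(βi_k, βj_k)` for `l' ≤ k < l`, then singletons `ε_k` for `l ≤ k < r`. -/
def tupB (l' l : ℕ) (γ δ βi βj ε : ℕ → Ordinal) : ℕ → Ordinal := fun m =>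
  if m < 2 * l' then (if m % 2 = 0 then γ (m / 2) else δ (m / 2))
  else if m < 2 * l then
    (if (m - 2 * l') % 2 = 0 then βi (l' + (m - 2 * l') / 2) else βj (l' + (m - 2 * l') / 2))
  else ε (m - l)

lemma sum_range_two_mul {M : Type*} [AddCommMonoid M] (n : ℕ) (f : ℕ → M) :
    ∑ t ∈ Finset.range (2*n), f t = ∑ k ∈ Finset.range n, (f (2*k) + f (2*k+1)) := by
  induction n with
  | zero => simp
  | succ n ih =>
    have : 2 * (n+1) = (2*n + 1) + 1 := by ring
    rw [this, Finset.sum_range_succ, Finset.sum_range_succ, ih, Finset.sum_range_succ]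
    abel

/-- If `x_i = (1/2)·(s_{l'} * ā_i)` and `x_j = (1/2)·(s_{l'} * ā_j)` share the
pairs `(γ_k, δ_k)` and the tail singletons `ε_k` but have disjoint middle parts
`βi`, `βj` (all tuples listed increasingly), then `x_i + x_j = s_l * b̄_{i,j}`. -/
theorem stmt_5 (r l l' : ℕ) (hr : 2 ≤ r) (hl' : l' < l) (hl : l ≤ r)
    (γ δ βi βj ε : ℕ → Ordinal)
    (hAi : StrictMono (fun m : Fin (r + l') => tupA l' l γ δ βi ε m))
    (hAj : StrictMono (fun m : Fin (r + l') => tupA l' l γ δ βj ε m))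
    (hB : StrictMono (fun m : Fin (r + l) => tupB l' l γ δ βi βj ε m)) :
    (2 : ℚ)⁻¹ • star (sStr r l') (fun m : Fin (r + l') => tupA l' l γ δ βi ε m) +
      (2 : ℚ)⁻¹ • star (sStr r l') (fun m : Fin (r + l') => tupA l' l γ δ βj ε m) =
    star (sStr r l) (fun m : Fin (r + l) => tupB l' l γ δ βi βj ε m) := by
  have h1 : 2 * l' ≤ l' + l := by omega
  have h2 : l' + l ≤ r + l' := by omega
  have h1' : 2 * l' ≤ 2 * l := by omega
  have h2' : 2 * l ≤ r + l := by omega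
  -- LHS decomposition
  have lhs_dec : ∀ β : ℕ → Ordinal,
      (2 : ℚ)⁻¹ • star (sStr r l') (fun m : Fin (r + l') => tupA l' l γ δ β ε m) =
      (∑ m ∈ Finset.range (2 * l'),
          Finsupp.single (if m % 2 = 0 then γ (m / 2) else δ (m / 2)) 1) +
      (∑ m ∈ Finset.range (l - l'), Finsupp.single (β (l' + m)) 2) +
      (∑ m ∈ Finset.range (r - l), Finsupp.single (ε (l + m)) 2) := by
    intro β
    unfold _root_.star; rw [Finset.smul_sum]
    simp only [Finsupp.smul_single, smul_eq_mul, sStr]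
    rw [Fin.sum_univ_eq_sum_range
      (fun m => Finsupp.single (tupA l' l γ δ β ε m) (2⁻¹ * if m < 2 * l' then 2 else 4))]
    rw [Finset.range_eq_Ico, ← Finset.sum_Ico_consecutive _ (Nat.zero_le (l' + l)) h2,
      ← Finset.sum_Ico_consecutive _ (Nat.zero_le (2 * l')) h1]
    congr 1
    · congr 1
      · rw [← Finset.range_eq_Ico]
        refine Finset.sum_congr (by rw [Finset.range_eq_Ico]) fun m hm => ?_
        simp only [Finset.mem_range, Finset.mem_Ico] at hm
        simp only [tupA]
        simp only [hm, if_pos]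
        norm_num
      · rw [Finset.sum_Ico_eq_sum_range]
        have : l' + l - 2 * l' = l - l' := by omega
        rw [this]
        refine Finset.sum_congr (by rw [Finset.range_eq_Ico]) fun m hm => ?_
        simp only [Finset.mem_range, Finset.mem_Ico] at hm
        simp only [tupA]
        have e1 : ¬ (2 * l' + m < 2 * l') := by omega
        have e2 : 2 * l' + m < l' + l := by omega
        have e3 : 2 * l' + m - l' = l' + m := by omega
        simp only [e1, e2, e3, if_false, if_true, if_neg, if_pos]
        norm_num
    · rw [Finset.sum_Ico_eq_sum_range]
      have : r + l' - (l' + l) = r - l := by omega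
      rw [this]
      refine Finset.sum_congr (by rw [Finset.range_eq_Ico]) fun m hm => ?_
      simp only [Finset.mem_range, Finset.mem_Ico] at hm
      simp only [tupA]
      have e1 : ¬ (l' + l + m < 2 * l') := by omega
      have e2 : ¬ (l' + l + m < l' + l) := by omega
      have e3 : l' + l + m - l' = l + m := by omega
      simp only [e1, e2, e3, if_false]
      norm_num
  -- RHS decomposition
  have rhs_dec :
      star (sStr r l) (fun m : Fin (r + l) => tupB l' l γ δ βi βj ε m) =
      (∑ m ∈ Finset.range (2 * l'),
          Finsupp.single (if m % 2 = 0 then γ (m / 2) else δ (m / 2)) 2) +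
      ((∑ m ∈ Finset.range (l - l'), Finsupp.single (βi (l' + m)) 2) +
       (∑ m ∈ Finset.range (l - l'), Finsupp.single (βj (l' + m)) 2)) +
      (∑ m ∈ Finset.range (r - l), Finsupp.single (ε (l + m)) 4) := by
    unfold _root_.star
    simp only [sStr]
    rw [Fin.sum_univ_eq_sum_range
      (fun m => Finsupp.single (tupB l' l γ δ βi βj ε m) (if m < 2 * l then 2 else 4))]
    rw [Finset.range_eq_Ico, ← Finset.sum_Ico_consecutive _ (Nat.zero_le (2 * l)) h2',
      ← Finset.sum_Ico_consecutive _ (Nat.zero_le (2 * l')) h1']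
    congr 1
    · congr 1
      · rw [← Finset.range_eq_Ico]
        refine Finset.sum_congr (by rw [Finset.range_eq_Ico]) fun m hm => ?_
        simp only [Finset.mem_range, Finset.mem_Ico] at hm
        simp only [tupB]
        have : m < 2 * l := by omega
        simp only [hm, this, if_pos]
      · rw [Finset.sum_Ico_eq_sum_range]
        have e0 : 2 * l - 2 * l' = 2 * (l - l') := by omega
        rw [e0, sum_range_two_mul]
        rw [← Finset.sum_add_distrib]
        refine Finset.sum_congr (by rw [Finset.range_eq_Ico]) fun m hm => ?_
        simp only [Finset.mem_range, Finset.mem_Ico] at hm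
        simp only [tupB]
        have a1 : ¬ (2 * l' + 2 * m < 2 * l') := by omega
        have a2 : 2 * l' + 2 * m < 2 * l := by omega
        have a3 : 2 * l' + 2 * m - 2 * l' = 2 * m := by omega
        have b1 : ¬ (2 * l' + (2 * m + 1) < 2 * l') := by omega
        have b2 : 2 * l' + (2 * m + 1) < 2 * l := by omega
        have b3 : 2 * l' + (2 * m + 1) - 2 * l' = 2 * m + 1 := by omega
        have c1 : (2 * m) % 2 = 0 := by omega
        have c2 : ¬ ((2 * m + 1) % 2 = 0) := by omega
        have d1 : 2 * m / 2 = m := by omega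
        have d2 : (2 * m + 1) / 2 = m := by omega
        simp only [a1, a2, a3, b1, b2, b3, c1, c2, d1, d2, if_false, if_true, if_pos, if_neg]
    · rw [Finset.sum_Ico_eq_sum_range]
      have : r + l - 2 * l = r - l := by omega
      rw [this]
      refine Finset.sum_congr (by rw [Finset.range_eq_Ico]) fun m hm => ?_
      simp only [Finset.mem_range, Finset.mem_Ico] at hm
      simp only [tupB]
      have e1 : ¬ (2 * l + m < 2 * l') := by omega
      have e2 : ¬ (2 * l + m < 2 * l) := by omega
      have e3 : 2 * l + m - l = l + m := by omega
      simp only [e1, e2, e3, if_false]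
  rw [lhs_dec βi, lhs_dec βj, rhs_dec]
  have s1 : (∑ m ∈ Finset.range (2 * l'),
        Finsupp.single (α := Ordinal) (if m % 2 = 0 then γ (m / 2) else δ (m / 2)) (1:ℚ)) +
      (∑ m ∈ Finset.range (2 * l'),
        Finsupp.single (if m % 2 = 0 then γ (m / 2) else δ (m / 2)) 1) =
      ∑ m ∈ Finset.range (2 * l'),
        Finsupp.single (if m % 2 = 0 then γ (m / 2) else δ (m / 2)) 2 := by
    rw [← Finset.sum_add_distrib]
    refine Finset.sum_congr rfl fun m _ => ?_
    rw [← Finsupp.single_add]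
    norm_num
  have s3 : (∑ m ∈ Finset.range (r - l), Finsupp.single (α := Ordinal) (ε (l + m)) (2:ℚ)) +
      (∑ m ∈ Finset.range (r - l), Finsupp.single (ε (l + m)) 2) =
      ∑ m ∈ Finset.range (r - l), Finsupp.single (ε (l + m)) 4 := by
    rw [← Finset.sum_add_distrib]
    refine Finset.sum_congr rfl fun m _ => ?_
    rw [← Finsupp.single_add]
    norm_num
  rw [← s1, ← s3]
  abel
end

section
/- With r = 2 and strings s_0 = (4,4), s_1 = (2,2,4), s_2 = (2,2,2,2): if A = {α_j : j ≤ ω} ⊆ ω₁ has order type ω+1, f is a 2-coloring of ⊕_{i<ω₁} ℚ, d_i(ā) = f(s_i * ā) is constant on [A]^{2+i} with value ρ_i for each i ≤ 2, and ρ_0 = ρ_2 = ρ, then X = {x_i : i ∈ ω} with x_i = (1/2)·(s_0 * (α_{2i}, α_{2i+1})) satisfies f(x + y) = ρ for all x, y ∈ X. -/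
/-- The ordinals below `ω₁`. -/
abbrev O1 := {o : Ordinal // o < (Cardinal.aleph 1).ord}

/-- `s_0 = (4,4)` for `r = 2`. -/
def s0 : Fin 2 → ℚ := ![4, 4]
/-- `s_1 = (2,2,4)` for `r = 2`. -/
def s1 : Fin 3 → ℚ := ![2, 2, 4]
/-- `s_2 = (2,2,2,2)` for `r = 2`. -/
def s2 : Fin 4 → ℚ := ![2, 2, 2, 2]

/-- `x_i = (1/2)·(s_0 * (α_{2i}, α_{2i+1}))`. -/
noncomputable def x11 (α : ℕ → O1) (αω : O1) (i : ℕ) : O1 →₀ ℚ :=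
  (2 : ℚ)⁻¹ • star s0 ![α (2 * i), α (2 * i + 1)]

lemma star_s0' (a b : O1) :
    star s0 ![a, b] = Finsupp.single a 4 + Finsupp.single b 4 := by
  unfold _root_.star
  simp [Fin.sum_univ_two, s0]

lemma star_s2' (a b c d : O1) :
    star s2 ![a, b, c, d] = Finsupp.single a 2 + Finsupp.single b 2 +
      Finsupp.single c 2 + Finsupp.single d 2 := by
  unfold _root_.star
  simp [Fin.sum_univ_four, s2]

lemma x11_eq (α : ℕ → O1) (αω : O1) (i : ℕ) :
    x11 α αω i = Finsupp.single (α (2 * i)) 2 + Finsupp.single (α (2 * i + 1)) 2 := by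
  rw [x11, star_s0', smul_add, Finsupp.smul_single, Finsupp.smul_single]
  norm_num

/-- Case `ρ_0 = ρ_2` of the `ZFC` proof of `ℝ →⁺ (ℵ₀)₂`: given a 2-coloring `f`
of `⊕_{i<ω₁} ℚ`, a set `A = {α_j : j ≤ ω}` of order type `ω+1` on which each
derived coloring `d_i(ā) = f(s_i * ā)` is constant with value `ρ_i`, and
`ρ_0 = ρ_2`, the vectors `x_i = (1/2)·(s_0 * (α_{2i}, α_{2i+1}))` satisfy
`2x_i = s_0 * (α_{2i}, α_{2i+1})`,
`x_i + x_j = s_2 * (α_{2i}, α_{2i+1}, α_{2j}, α_{2j+1})` for `i < j`,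
and `f(x + y) = ρ_0` for all `x, y ∈ X = {x_i : i ∈ ω}`. -/
theorem stmt_11 (f : (O1 →₀ ℚ) → Fin 2) (α : ℕ → O1) (αω : O1)
    (hα : StrictMono α) (htop : ∀ j, α j < αω)
    (ρ0 ρ1 ρ2 : Fin 2)
    (h0 : ∀ a : Fin 2 → O1, StrictMono a →
      (∀ m, a m ∈ Set.range α ∪ {αω}) → f (star s0 a) = ρ0)
    (h1 : ∀ a : Fin 3 → O1, StrictMono a →
      (∀ m, a m ∈ Set.range α ∪ {αω}) → f (star s1 a) = ρ1)
    (h2 : ∀ a : Fin 4 → O1, StrictMono a →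
      (∀ m, a m ∈ Set.range α ∪ {αω}) → f (star s2 a) = ρ2)
    (hρ : ρ0 = ρ2) :
    (∀ i, (2 : ℚ) • x11 α αω i = star s0 ![α (2 * i), α (2 * i + 1)]) ∧
    (∀ i j, i < j → x11 α αω i + x11 α αω j =
      star s2 ![α (2 * i), α (2 * i + 1), α (2 * j), α (2 * j + 1)]) ∧
    (Set.range (x11 α αω)).Infinite ∧
    (∀ a ∈ Set.range (x11 α αω), ∀ b ∈ Set.range (x11 α αω), f (a + b) = ρ0) := by
  have hdouble : ∀ i, (2 : ℚ) • x11 α αω i = star s0 ![α (2 * i), α (2 * i + 1)] := by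
    intro i
    rw [x11, smul_smul]
    norm_num
  have hsum : ∀ i j, i < j → x11 α αω i + x11 α αω j =
      star s2 ![α (2 * i), α (2 * i + 1), α (2 * j), α (2 * j + 1)] := by
    intro i j _
    rw [x11_eq, x11_eq, star_s2']
    abel
  have hinj : Function.Injective (x11 α αω) := by
    intro i j hij
    by_contra hne
    have h1 : (x11 α αω i) (α (2 * i)) = 2 := by
      rw [x11_eq]
      have : α (2 * i) ≠ α (2 * i + 1) := fun h => by
        have := hα.injective h; omega
      simp [Finsupp.single_apply, this.symm, Ne.symm this]
    have h2 : (x11 α αω j) (α (2 * i)) = 0 := by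
      rw [x11_eq]
      have e1 : α (2 * j) ≠ α (2 * i) := fun h => by
        have := hα.injective h; omega
      have e2 : α (2 * j + 1) ≠ α (2 * i) := fun h => by
        have := hα.injective h; omega
      simp [Finsupp.single_apply, e1, e2]
    rw [hij, h2] at h1
    norm_num at h1
  refine ⟨hdouble, hsum, Set.infinite_range_of_injective hinj, ?_⟩
  rintro a ⟨i, rfl⟩ b ⟨j, rfl⟩
  rcases lt_trichotomy i j with h | h | h
  · rw [hsum i j h, hρ]
    apply h2
    · rw [Fin.strictMono_iff_lt_succ]
      intro m
      fin_cases m <;> simp <;> exact hα (by omega)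
    · intro m; left; fin_cases m <;> exact ⟨_, rfl⟩
  · subst h
    rw [← two_smul ℚ, hdouble]
    apply h0
    · rw [Fin.strictMono_iff_lt_succ]
      intro m
      fin_cases m <;> simp <;> exact hα (by omega)
    · intro m; left; fin_cases m <;> exact ⟨_, rfl⟩
  · rw [add_comm, hsum j i h, hρ]
    apply h2
    · rw [Fin.strictMono_iff_lt_succ]
      intro m
      fin_cases m <;> simp <;> exact hα (by omega)
    · intro m; left; fin_cases m <;> exact ⟨_, rfl⟩
end

section
/- With r = 2 and strings s_0 = (4,4), s_1 = (2,2,4), s_2 = (2,2,2,2): if A = {α_j : j ≤ ω} ⊆ ω₁ has order type ω+1, f is a 2-coloring of ⊕_{i<ω₁} ℚ, d_i(ā) = f(s_i * ā) is constant on [A]^{2+i} with value ρ_i for i ≤ 2, and ρ_1 = ρ_2 = ρ, then X = {x_i : i ∈ ω} with x_i = (1/2)·(s_1 * (α_0, α_1, α_{i+2})) satisfies f(x + y) = ρ for all x, y ∈ X. -/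
/-- `x_i = (1/2)·(s_1 * (α_0, α_1, α_{i+2}))`. -/
noncomputable def x12 (α : ℕ → O1) (αω : O1) (i : ℕ) : O1 →₀ ℚ :=
  (2 : ℚ)⁻¹ • star s1 ![α 0, α 1, α (i + 2)]

/-- Case `ρ_1 = ρ_2` of the `ZFC` proof of `ℝ →⁺ (ℵ₀)₂`: given a 2-coloring `f`
of `⊕_{i<ω₁} ℚ`, a set `A = {α_j : j ≤ ω}` of order type `ω+1` on which each
derived coloring `d_i(ā) = f(s_i * ā)` is constant with value `ρ_i`, and
`ρ_1 = ρ_2`, the vectors `x_i = (1/2)·(s_1 * (α_0, α_1, α_{i+2}))` satisfy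
`2x_i = s_1 * (α_0, α_1, α_{i+2})`,
`x_i + x_j = s_2 * (α_0, α_1, α_{i+2}, α_{j+2})` for `i < j`,
and `f(x + y) = ρ_1` for all `x, y ∈ X = {x_i : i ∈ ω}`. -/
theorem stmt_12 (f : (O1 →₀ ℚ) → Fin 2) (α : ℕ → O1) (αω : O1)
    (hα : StrictMono α) (htop : ∀ j, α j < αω)
    (ρ0 ρ1 ρ2 : Fin 2)
    (h0 : ∀ a : Fin 2 → O1, StrictMono a →
      (∀ m, a m ∈ Set.range α ∪ {αω}) → f (star s0 a) = ρ0)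
    (h1 : ∀ a : Fin 3 → O1, StrictMono a →
      (∀ m, a m ∈ Set.range α ∪ {αω}) → f (star s1 a) = ρ1)
    (h2 : ∀ a : Fin 4 → O1, StrictMono a →
      (∀ m, a m ∈ Set.range α ∪ {αω}) → f (star s2 a) = ρ2)
    (hρ : ρ1 = ρ2) :
    (∀ i, (2 : ℚ) • x12 α αω i = star s1 ![α 0, α 1, α (i + 2)]) ∧
    (∀ i j, i < j → x12 α αω i + x12 α αω j =
      star s2 ![α 0, α 1, α (i + 2), α (j + 2)]) ∧
    (Set.range (x12 α αω)).Infinite ∧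
    (∀ a ∈ Set.range (x12 α αω), ∀ b ∈ Set.range (x12 α αω), f (a + b) = ρ1) := by
  have key1 : ∀ i, (2 : ℚ) • x12 α αω i = star s1 ![α 0, α 1, α (i + 2)] := by
    intro i
    rw [x12, smul_smul]
    norm_num
  have key2 : ∀ i j, i < j → x12 α αω i + x12 α αω j =
      star s2 ![α 0, α 1, α (i + 2), α (j + 2)] := by
    intro i j _
    ext o
    simp [x12, _root_.star, s1, s2, Fin.sum_univ_succ, Finsupp.single_apply]
    split_ifs <;> norm_num
  have hsm : ∀ i : ℕ, StrictMono ![α 0, α 1, α (i + 2)] := by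
    intro i
    apply Fin.strictMono_iff_lt_succ.mpr
    intro m
    fin_cases m <;> simp <;> apply hα <;> omega
  have hval : ∀ i : ℕ, (x12 α αω i) (α (i + 2)) = 2 := by
    intro i
    have h01 : α 0 ≠ α (i + 2) := fun h => by have := hα.injective h; omega
    have h11 : α 1 ≠ α (i + 2) := fun h => by have := hα.injective h; omega
    simp [x12, _root_.star, s1, Fin.sum_univ_succ, Finsupp.single_apply, h01, h11]
    norm_num
  refine ⟨key1, key2, ?_, ?_⟩
  · apply Set.infinite_range_of_injective
    intro i j hij
    by_contra hne
    have hne2 : α (i + 2) ≠ α (j + 2) := fun h => hne (by have := hα.injective h; omega)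
    have := hval i
    rw [hij] at this
    have h01 : α 0 ≠ α (i + 2) := fun h => by have := hα.injective h; omega
    have h11 : α 1 ≠ α (i + 2) := fun h => by have := hα.injective h; omega
    simp [x12, _root_.star, s1, Fin.sum_univ_succ, Finsupp.single_apply, h01, h11,
      hne2.symm] at this
  · rintro a ⟨i, rfl⟩ b ⟨j, rfl⟩
    have mem1 : ∀ i : ℕ, ∀ m : Fin 3, (![α 0, α 1, α (i + 2)]) m ∈ Set.range α ∪ {αω} := by
      intro i m
      fin_cases m <;> exact Or.inl ⟨_, rfl⟩
    have mem2 : ∀ i j : ℕ, ∀ m : Fin 4,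
        (![α 0, α 1, α (i + 2), α (j + 2)]) m ∈ Set.range α ∪ {αω} := by
      intro i j m
      fin_cases m <;> exact Or.inl ⟨_, rfl⟩
    rcases lt_trichotomy i j with h | h | h
    · rw [key2 i j h, hρ]
      apply h2 _ _ (mem2 i j)
      apply Fin.strictMono_iff_lt_succ.mpr
      intro m
      fin_cases m <;> simp <;> apply hα <;> omega
    · subst h
      have : x12 α αω i + x12 α αω i = (2 : ℚ) • x12 α αω i := by module
      rw [this, key1 i]
      exact h1 _ (hsm i) (mem1 i)
    · rw [add_comm, key2 j i h, hρ]
      apply h2 _ _ (mem2 j i)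
      apply Fin.strictMono_iff_lt_succ.mpr
      intro m
      fin_cases m <;> simp <;> apply hα <;> omega
end
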